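/- Let X be a normed partially ordered vector space with closed generating cone K, let Y be a vector lattice, and let i: X → Y be bipositive linear with i[X] majorizing in Y. Define ρ(y) := inf{‖x‖ : x ∈ X, −i(x) ≤ y ≤ i(x)}. If u, v ∈ X satisfy ρ(|i(u)| ∧ |i(v)|) = 0, then u ⊥ v in X, i.e. {u+v, −u−v}^u = {u−v, −u+v}^u. -/

import Mathlib

/-- Disjointness in a partially ordered vector space. -/
def PDisj {X : Type*} [AddCommGroup X] [PartialOrder X] (x y : X) : Prop :=
  upperBounds {x + y, -x - y} = upperBounds {x - y, -x + y}

section LatticeLemmas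

variable {Y : Type*} [Lattice Y] [AddCommGroup Y]
  [CovariantClass Y Y (· + ·) (· ≤ ·)]

lemma neg_abs_le_lattice (a : Y) : -|a| ≤ a := by
  exact neg_le.mp (neg_le_abs a)

lemma abs_le_lattice {a b : Y} (h1 : a ≤ b) (h2 : -a ≤ b) : |a| ≤ b := sup_le h1 h2

/-- `|a| ≤ |a + b| + |b|` in a lattice-ordered group. -/
lemma abs_le_abs_add_add_abs (a b : Y) : |a| ≤ |a + b| + |b| := by
  have e : a = (a + b) + (-b) := by abel
  calc |a| = |(a + b) + (-b)| := by rw [← e]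
    _ ≤ |a + b| + |(-b)| := abs_add_le _ _
    _ = |a + b| + |b| := by rw [abs_neg]

/-- Lattice-group inequality: `|a - b| ≤ |a + b| + (|a| ⊓ |b| + |a| ⊓ |b|)`. -/
lemma abs_sub_le_abs_add_add' (a b : Y) :
    |a - b| ≤ |a + b| + (|a| ⊓ |b| + |a| ⊓ |b|) := by
  have h1 : |a - b| ≤ |a| + |b| := by
    have e : a - b = a + (-b) := by abel
    calc |a - b| = |a + (-b)| := by rw [e]
      _ ≤ |a| + |(-b)| := abs_add_le _ _
      _ = |a| + |b| := by rw [abs_neg]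
  have h2 : |a| ⊔ |b| ≤ |a + b| + |a| ⊓ |b| := by
    refine sup_le ?_ ?_
    · have ha : |a| - |a + b| ≤ |a| ⊓ |b| := by
        refine le_inf ?_ ?_
        · exact sub_le_self _ (abs_nonneg _)
        · refine sub_le_iff_le_add'.mpr ?_
          exact abs_le_abs_add_add_abs a b
      exact sub_le_iff_le_add'.mp ha
    · have hb : |b| - |a + b| ≤ |a| ⊓ |b| := by
        refine le_inf ?_ ?_
        · refine sub_le_iff_le_add'.mpr ?_
          have := abs_le_abs_add_add_abs b a
          rwa [add_comm b a] at this
        · exact sub_le_self _ (abs_nonneg _)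
      exact sub_le_iff_le_add'.mp hb
  have h3 : |a| + |b| = (|a| ⊓ |b|) + (|a| ⊔ |b|) := (inf_add_sup _ _).symm
  calc |a - b| ≤ |a| + |b| := h1
    _ = (|a| ⊓ |b|) + (|a| ⊔ |b|) := h3
    _ ≤ (|a| ⊓ |b|) + (|a + b| + |a| ⊓ |b|) := add_le_add le_rfl h2
    _ = |a + b| + (|a| ⊓ |b| + |a| ⊓ |b|) := by abel

end LatticeLemmas

/-- Let `X` be a normed partially ordered vector space with closed generating cone,
`Y` a vector lattice and `i : X → Y` bipositive linear with majorizing image.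
If `ρ(|i u| ⊓ |i v|) = 0`, where `ρ(y) = inf{‖x‖ : -i x ≤ y ≤ i x}`, then `u ⊥ v` in `X`. -/
theorem stmt7 {X Y : Type*}
    [NormedAddCommGroup X] [NormedSpace ℝ X] [PartialOrder X]
    [CovariantClass X X (· + ·) (· ≤ ·)]
    (hsmulX : ∀ (c : ℝ) (x : X), 0 ≤ c → 0 ≤ x → 0 ≤ c • x)
    (hclosed : IsClosed {x : X | 0 ≤ x})
    (hgen : ∀ x : X, ∃ u v : X, 0 ≤ u ∧ 0 ≤ v ∧ x = u - v)
    [Lattice Y] [AddCommGroup Y] [CovariantClass Y Y (· + ·) (· ≤ ·)] [Module ℝ Y]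
    (hsmulY : ∀ (c : ℝ) (v : Y), 0 ≤ c → 0 ≤ v → 0 ≤ c • v)
    (i : X →ₗ[ℝ] Y) (hbi : ∀ x : X, 0 ≤ x ↔ 0 ≤ i x)
    (hmaj : ∀ y : Y, ∃ x : X, y ≤ i x)
    (ρ : Y → ℝ)
    (hρ : ∀ y : Y, ρ y = sInf {r : ℝ | ∃ x : X, -i x ≤ y ∧ y ≤ i x ∧ ‖x‖ = r})
    (u v : X) (h : ρ (|i u| ⊓ |i v|) = 0) : PDisj u v := by
  -- Key step: one inclusion, for general a b with the ρ-hypothesis.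
  have key : ∀ a b : X, ρ (|i a| ⊓ |i b|) = 0 →
      upperBounds {a + b, -a - b} ⊆ upperBounds {a - b, -a + b} := by
    intro a b hab w hw
    have h1 : a + b ≤ w := hw (by simp)
    have h2 : -a - b ≤ w := hw (by simp)
    set Y0 : Y := |i a| ⊓ |i b| with hY0
    have hY0nonneg : (0:Y) ≤ Y0 := le_inf (abs_nonneg _) (abs_nonneg _)
    set S : Set ℝ := {r : ℝ | ∃ x : X, -i x ≤ Y0 ∧ Y0 ≤ i x ∧ ‖x‖ = r} with hS
    have hSne : S.Nonempty := by
      obtain ⟨x0, hx0⟩ := hmaj Y0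
      obtain ⟨p, q, hp, hq, hpq⟩ := hgen x0
      refine ⟨‖p‖, p, ?_, ?_, rfl⟩
      · have hip : (0:Y) ≤ i p := (hbi p).mp hp
        have hnp : -i p ≤ 0 := neg_nonpos.mpr hip
        exact hnp.trans hY0nonneg
      · have hqY : (0:Y) ≤ i q := (hbi q).mp hq
        have hle : i x0 ≤ i p := by
          rw [hpq, map_sub]
          calc i p - i q ≤ i p - 0 := sub_le_sub_left hqY _
            _ = i p := by abel
        exact hx0.trans hle
    have hinf : sInf S = 0 := by rw [← hρ Y0]; exact hab
    -- approximating sequence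
    have hseq : ∀ n : ℕ, ∃ x : X, -i x ≤ Y0 ∧ Y0 ≤ i x ∧ ‖x‖ < 1 / (n + 1) := by
      intro n
      by_contra hcon
      push_neg at hcon
      have hlb : (1 : ℝ) / (n + 1) ≤ sInf S := by
        apply le_csInf hSne
        rintro r ⟨x, hx1, hx2, rfl⟩
        exact hcon x hx1 hx2
      rw [hinf] at hlb
      have : (0:ℝ) < 1 / (n + 1) := by positivity
      linarith
    choose f hf1 hf2 hf3 using hseq
    have hftend : Filter.Tendsto f Filter.atTop (nhds 0) := by
      rw [tendsto_zero_iff_norm_tendsto_zero]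
      refine squeeze_zero (fun n => norm_nonneg _) (fun n => (hf3 n).le) ?_
      exact tendsto_one_div_add_atTop_nhds_zero_nat
    -- w dominates: |i a + i b| ≤ i w
    have hiw : |i a + i b| ≤ i w := by
      refine abs_le_lattice ?_ ?_
      · have h1' : (0:Y) ≤ i (w - (a + b)) := (hbi _).mp (sub_nonneg.mpr h1)
        rw [map_sub, map_add] at h1'
        exact sub_nonneg.mp h1'
      · have h2' : (0:Y) ≤ i (w - (-a - b)) := (hbi _).mp (sub_nonneg.mpr h2)
        rw [map_sub, map_sub, map_neg] at h2'
        have e : i w - (-i a - i b) = i w - (-(i a + i b)) := by abel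
        rw [e] at h2'
        exact sub_nonneg.mp h2'
    -- main estimate: for each t with i t ≤ |i a - i b|, t ≤ w
    have main : ∀ t : X, i t ≤ |i a - i b| → t ≤ w := by
      intro t ht
      have hzmem : ∀ n : ℕ, w + f n + f n - t ∈ {x : X | 0 ≤ x} := by
        intro n
        have hchain : i t ≤ i w + i (f n) + i (f n) := by
          calc i t ≤ |i a - i b| := ht
            _ ≤ |i a + i b| + (Y0 + Y0) := abs_sub_le_abs_add_add' _ _
            _ ≤ i w + (i (f n) + i (f n)) :=
                add_le_add hiw (add_le_add (hf2 n) (hf2 n))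
            _ = i w + i (f n) + i (f n) := by rw [add_assoc]
        have h0 : (0:Y) ≤ i (w + f n + f n - t) := by
          rw [map_sub, map_add, map_add]
          exact sub_nonneg.mpr hchain
        exact (hbi _).mpr h0
      have htend : Filter.Tendsto (fun n => w + f n + f n - t) Filter.atTop
          (nhds (w - t)) := by
        have H : Filter.Tendsto (fun n => w + f n + f n - t) Filter.atTop
            (nhds (w + 0 + 0 - t)) :=
          (((tendsto_const_nhds.add hftend).add hftend).sub tendsto_const_nhds)
        simpa using H
      have hmem : w - t ∈ {x : X | 0 ≤ x} :=
        hclosed.mem_of_tendsto htend (Filter.Eventually.of_forall hzmem)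
      exact sub_nonneg.mp hmem
    -- conclude
    rintro z hz
    simp only [Set.mem_insert_iff, Set.mem_singleton_iff] at hz
    rcases hz with rfl | rfl
    · refine main _ ?_
      rw [map_sub]
      exact le_abs_self _
    · refine main _ ?_
      have e : i (-a + b) = -(i a - i b) := by rw [map_add, map_neg]; abel
      rw [e]
      exact neg_le_abs _
  -- apply key in both directions
  have fwd := key u v h
  have hneg : ρ (|i u| ⊓ |i (-v)|) = 0 := by
    rw [map_neg, abs_neg]; exact h
  have bwd := key u (-v) hneg
  have e1 : u + -v = u - v := by abel
  have e2 : -u - -v = -u + v := by abel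
  have e3 : u - -v = u + v := by abel
  have e4 : -u + -v = -u - v := by abel
  rw [e1, e2, e3, e4] at bwd
  exact le_antisymm fwd bwd
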